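/- Let β ≥ 0, a > 0, h > 0 and λ ∈ ℂ. Suppose v : [0,∞) → ℂ is continuously differentiable with v and v' square-integrable on (0,∞), twice differentiable at every point of (0,a) ∪ (a,∞), satisfies −h² v''(x) + i (x−a)₊^β v(x) − λ² v(x) = 0 for all x ∈ (0,a) ∪ (a,∞), and satisfies v(0) = 0 or v'(0) = 0. Then ∫₀^∞ (x−a)₊^β |v(x)|² dx = Im(λ²) · ∫₀^∞ |v(x)|² dx, where (x−a)₊ = max(x−a,0). -/

import Mathlib

open MeasureTheory Set Filter Topology

/-- Energy identity for solutions of the complex absorbing potential problem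
`-h²v'' + i(x-a)₊^β v - λ²v = 0` on `(0,∞)` with `v(0) = 0` or `v'(0) = 0`:
`∫₀^∞ (x-a)₊^β |v|² = Im(λ²) ∫₀^∞ |v|²`. -/
theorem stmt_10 (β a h : ℝ) (hβ : 0 ≤ β) (ha : 0 < a) (hh : 0 < h) (lam : ℂ)
    (v v' v'' : ℝ → ℂ)
    (hv1 : ∀ x ∈ Ici (0:ℝ), HasDerivWithinAt v (v' x) (Ici 0) x)
    (hv1c : ContinuousOn v' (Ici 0))
    (hvL2 : IntegrableOn (fun x => ‖v x‖ ^ 2) (Ioi 0))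
    (hv'L2 : IntegrableOn (fun x => ‖v' x‖ ^ 2) (Ioi 0))
    (hv2 : ∀ x ∈ Ioo (0:ℝ) a ∪ Ioi a, HasDerivAt v' (v'' x) x)
    (hbc : v 0 = 0 ∨ v' 0 = 0)
    (hode : ∀ x ∈ Ioo (0:ℝ) a ∪ Ioi a,
      -(h:ℂ) ^ 2 * v'' x + Complex.I * (((max (x - a) 0) ^ β : ℝ) : ℂ) * v x
        - lam ^ 2 * v x = 0) :
    ∫ x in Ioi (0:ℝ), (max (x - a) 0) ^ β * ‖v x‖ ^ 2
      = (lam ^ 2).im * ∫ x in Ioi (0:ℝ), ‖v x‖ ^ 2 := by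
  -- notation
  set W : ℝ → ℝ := fun x => (max (x - a) 0) ^ β with hWdef
  set q : ℝ → ℝ := fun x => ‖v x‖ ^ 2 with hqdef
  set g : ℝ → ℝ := fun x => W x * q x with hgdef
  set F : ℝ → ℝ := fun x => g x - (lam ^ 2).im * q x with hFdef
  set G : ℝ → ℝ := fun x => h ^ 2 * (v' x * star (v x)).im with hGdef
  have hWnn : ∀ x, 0 ≤ W x := fun x => Real.rpow_nonneg (le_max_right _ _) β
  have hqnn : ∀ x, 0 ≤ q x := fun x => by simp [hqdef]
  have hgnn : ∀ x, 0 ≤ g x := fun x => mul_nonneg (hWnn x) (hqnn x)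
  have hWcont : Continuous W :=
    (Real.continuous_rpow_const hβ).comp ((continuous_id.sub continuous_const).max
      continuous_const)
  have hvcont : ContinuousOn v (Ici 0) := fun x hx => (hv1 x hx).continuousWithinAt
  have hqcont : ContinuousOn q (Ici 0) := (hvcont.norm).pow 2
  have hgcont : ContinuousOn g (Ici 0) := (hWcont.continuousOn).mul hqcont
  have hFcont : ContinuousOn F (Ici 0) := hgcont.sub (continuousOn_const.mul hqcont)
  have hGcont : ContinuousOn G (Ici 0) := by
    apply continuousOn_const.mul
    exact Complex.continuous_im.comp_continuousOn
      (hv1c.mul (continuous_star.comp_continuousOn hvcont))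
  -- derivative of G
  have hGd : ∀ x ∈ Ioo (0:ℝ) a ∪ Ioi a, HasDerivAt G (F x) x := by
    intro x hx
    have hx0 : 0 < x := by
      rcases hx with h' | h'
      · exact h'.1
      · exact ha.trans h'
    have hvx : HasDerivAt v (v' x) x :=
      (hv1 x hx0.le).hasDerivAt (Ici_mem_nhds hx0)
    have hv'x : HasDerivAt v' (v'' x) x := hv2 x hx
    have hconj : HasDerivAt (fun y => star (v y)) (star (v' x)) x := hvx.star
    have hmul : HasDerivAt (fun y => v' y * star (v y))
        (v'' x * star (v x) + v' x * star (v' x)) x := hv'x.mul hconj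
    have him := Complex.imCLM.hasFDerivAt.comp_hasDerivAt x hmul
    simp only [Function.comp_def, Complex.imCLM_apply] at him
    have hfull : HasDerivAt G (h ^ 2 * (v'' x * star (v x) + v' x * star (v' x)).im) x := by
      rw [hGdef]; exact him.const_mul _
    have e0 := hode x hx
    have e : (h:ℂ) ^ 2 * (v'' x * star (v x) + v' x * star (v' x))
        = Complex.I * (((max (x - a) 0) ^ β : ℝ) : ℂ) * (v x * star (v x))
          - lam ^ 2 * (v x * star (v x)) + (h:ℂ) ^ 2 * (v' x * star (v' x)) := by
      simp only [Complex.star_def]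
      linear_combination (-((starRingEnd ℂ) (v x))) * e0
    have e2 : ((h:ℂ) ^ 2 * (v'' x * star (v x) + v' x * star (v' x))).im
        = ((max (x - a) 0) ^ β) * Complex.normSq (v x)
          - (lam ^ 2).im * Complex.normSq (v x) := by
      have hc : ((h:ℂ)) ^ 2 = (((h ^ 2 : ℝ)) : ℂ) := by push_cast; ring
      rw [e, hc]
      simp only [Complex.star_def, Complex.mul_conj]
      simp only [Complex.add_im, Complex.sub_im, Complex.mul_im, Complex.mul_re,
        Complex.ofReal_re, Complex.ofReal_im, Complex.I_re, Complex.I_im]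
      ring
    have e3 : h ^ 2 * (v'' x * star (v x) + v' x * star (v' x)).im
        = ((h:ℂ) ^ 2 * (v'' x * star (v x) + v' x * star (v' x))).im := by
      have hc : ((h:ℂ)) ^ 2 = (((h ^ 2 : ℝ)) : ℂ) := by push_cast; ring
      rw [hc, Complex.im_ofReal_mul]
    have e4 : Complex.normSq (v x) = q x := by
      rw [hqdef]
      simp [Complex.normSq_eq_norm_sq]
    have efin : h ^ 2 * (v'' x * star (v x) + v' x * star (v' x)).im = F x := by
      rw [e3, e2, e4, hFdef, hgdef, hWdef]
    rw [← efin]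
    exact hfull
  -- G 0 = 0
  have hG0 : G 0 = 0 := by
    rcases hbc with h' | h' <;> simp [hGdef, h']
  -- interval integrability
  have hFint : ∀ s t : ℝ, 0 ≤ s → s ≤ t → IntervalIntegrable F volume s t := by
    intro s t hs hst
    apply ContinuousOn.intervalIntegrable
    apply hFcont.mono
    rw [uIcc_of_le hst]
    exact fun y hy => hs.trans hy.1
  have hgint : ∀ s t : ℝ, 0 ≤ s → s ≤ t → IntervalIntegrable g volume s t := by
    intro s t hs hst
    apply ContinuousOn.intervalIntegrable
    apply hgcont.mono
    rw [uIcc_of_le hst]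
    exact fun y hy => hs.trans hy.1
  have hqint : ∀ s t : ℝ, 0 ≤ s → s ≤ t → IntervalIntegrable q volume s t := by
    intro s t hs hst
    apply ContinuousOn.intervalIntegrable
    apply hqcont.mono
    rw [uIcc_of_le hst]
    exact fun y hy => hs.trans hy.1
  -- FTC
  have hFTC : ∀ T : ℝ, a ≤ T → ∫ x in (0:ℝ)..T, F x = G T - G 0 := by
    intro T hT
    have h1 : ∫ x in (0:ℝ)..a, F x = G a - G 0 := by
      apply intervalIntegral.integral_eq_sub_of_hasDerivAt_of_le ha.le
      · exact hGcont.mono (fun y hy => hy.1)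
      · exact fun x hx => hGd x (Or.inl hx)
      · exact hFint 0 a le_rfl ha.le
    have h2 : ∫ x in a..T, F x = G T - G a := by
      apply intervalIntegral.integral_eq_sub_of_hasDerivAt_of_le hT
      · exact hGcont.mono (fun y hy => ha.le.trans hy.1)
      · exact fun x hx => hGd x (Or.inr hx.1)
      · exact hFint a T ha.le hT
    have h3 := intervalIntegral.integral_add_adjacent_intervals
      (hFint 0 a le_rfl ha.le) (hFint a T ha.le hT)
    rw [← h3, h1, h2]; ring
  -- split F integral
  have hsplit : ∀ T : ℝ, 0 ≤ T →
      ∫ x in (0:ℝ)..T, F x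
        = (∫ x in (0:ℝ)..T, g x) - (lam ^ 2).im * ∫ x in (0:ℝ)..T, q x := by
    intro T hT
    rw [hFdef]
    rw [intervalIntegral.integral_sub (hgint 0 T le_rfl hT)
      ((hqint 0 T le_rfl hT).const_mul _)]
    rw [intervalIntegral.integral_const_mul]
  -- key identity
  have hkey : ∀ T : ℝ, a ≤ T →
      (∫ x in (0:ℝ)..T, g x) = G T + (lam ^ 2).im * ∫ x in (0:ℝ)..T, q x := by
    intro T hT
    have h5 := hFTC T hT
    rw [hsplit T (ha.le.trans hT), hG0] at h5
    linarith
  -- integrability of the product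
  have hprod : IntegrableOn (fun x => ‖v' x‖ * ‖v x‖) (Ioi 0) := by
    apply Integrable.mono' ((hv'L2.add hvL2).div_const 2)
    · apply ContinuousOn.aestronglyMeasurable ?_ measurableSet_Ioi
      exact ((hv1c.mono (Ioi_subset_Ici le_rfl)).norm).mul
        ((hvcont.mono (Ioi_subset_Ici le_rfl)).norm)
    · apply ae_of_all
      intro x
      have h1 : 0 ≤ ‖v' x‖ * ‖v x‖ := mul_nonneg (norm_nonneg _) (norm_nonneg _)
      rw [Real.norm_of_nonneg h1]
      simp only [Pi.add_apply, hqdef]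
      nlinarith [sq_nonneg (‖v' x‖ - ‖v x‖)]
  -- frequently small G
  have hfreq : ∀ ε : ℝ, 0 < ε → ∃ᶠ T in atTop, |G T| ≤ ε := by
    intro ε hε
    by_contra hcon
    rw [not_frequently] at hcon
    simp only [not_le] at hcon
    rw [eventually_atTop] at hcon
    obtain ⟨Mb, hMb⟩ := hcon
    set M' := max Mb 1 with hM'def
    have hM'pos : (0:ℝ) < M' := lt_of_lt_of_le one_pos (le_max_right _ _)
    have hbound : ∀ x ∈ Ioi M', ε / h ^ 2 ≤ ‖v' x‖ * ‖v x‖ := by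
      intro x hx
      have hx' : Mb ≤ x := le_trans (le_max_left _ _) (le_of_lt hx)
      have h1 := hMb x hx'
      have h2 : |G x| ≤ h ^ 2 * (‖v' x‖ * ‖v x‖) := by
        rw [hGdef]
        simp only
        rw [abs_mul, abs_of_nonneg (by positivity : (0:ℝ) ≤ h ^ 2)]
        apply mul_le_mul_of_nonneg_left _ (by positivity : (0:ℝ) ≤ h ^ 2)
        calc |(v' x * star (v x)).im| ≤ ‖v' x * star (v x)‖ :=
              Complex.abs_im_le_norm _
          _ = ‖v' x‖ * ‖v x‖ := by
              simp [Complex.star_def]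
      have h3 : ε < h ^ 2 * (‖v' x‖ * ‖v x‖) := lt_of_lt_of_le h1 h2
      rw [div_le_iff₀ (by positivity : (0:ℝ) < h ^ 2)]
      nlinarith
    have hci : Integrable (fun _ : ℝ => ε / h ^ 2) (volume.restrict (Ioi M')) := by
      apply Integrable.mono' (hprod.mono_set (Ioi_subset_Ioi hM'pos.le))
      · exact aestronglyMeasurable_const
      · filter_upwards [ae_restrict_mem measurableSet_Ioi] with x hx
        rw [Real.norm_of_nonneg (by positivity)]
        exact hbound x hx
    rw [integrable_const_iff] at hci
    rcases hci with h' | h'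
    · have hpos : (0:ℝ) < ε / h ^ 2 := by positivity
      rw [h'] at hpos; exact lt_irrefl _ hpos
    · have h'' := h'.measure_univ_lt_top
      rw [Measure.restrict_apply_univ, Real.volume_Ioi] at h''
      exact (lt_irrefl _ h'').elim
  -- limit of the q-integral
  have hI2 : Tendsto (fun T : ℝ => ∫ x in (0:ℝ)..T, q x) atTop
      (𝓝 (∫ x in Ioi (0:ℝ), q x)) :=
    intervalIntegral_tendsto_integral_Ioi 0 hvL2 tendsto_id
  set R : ℝ := (lam ^ 2).im * ∫ x in Ioi (0:ℝ), q x with hRdef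
  have hl' : Tendsto (fun T : ℝ => (lam ^ 2).im * ∫ x in (0:ℝ)..T, q x) atTop (𝓝 R) :=
    hI2.const_mul _
  -- the monotone truncated integral
  set M : ℝ → ℝ := fun T => ∫ x in (0:ℝ)..(max T a), g x with hMdef
  have hMeq : ∀ T : ℝ, a ≤ T → M T = ∫ x in (0:ℝ)..T, g x := by
    intro T hT
    rw [hMdef]; simp only [max_eq_left hT]
  have hMmono : Monotone M := by
    intro s t hst
    have h0s : (0:ℝ) ≤ max s a := le_of_lt (lt_of_lt_of_le ha (le_max_right _ _))
    have h2 : max s a ≤ max t a := max_le_max hst le_rfl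
    have h3 := intervalIntegral.integral_add_adjacent_intervals
      (hgint 0 (max s a) le_rfl h0s) (hgint (max s a) (max t a) h0s h2)
    have h4 : 0 ≤ ∫ x in (max s a)..(max t a), g x :=
      intervalIntegral.integral_nonneg h2 (fun u _ => hgnn u)
    rw [hMdef]
    simp only
    linarith
  have hbmax : Tendsto (fun T : ℝ => max T a) atTop atTop :=
    tendsto_atTop_mono (fun T => le_max_left T a) tendsto_id
  -- the limit of M is R
  have hMR : Tendsto M atTop (𝓝 R) := by
    rcases tendsto_of_monotone hMmono with hdiv | ⟨l, hl⟩
    · exfalso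
      have hev : ∀ᶠ T in atTop, (lam ^ 2).im * (∫ x in (0:ℝ)..T, q x) ≤ R + 1 :=
        hl'.eventually (eventually_le_nhds (lt_add_one R))
      have hbig : ∀ᶠ T in atTop, R + 2 < M T := hdiv.eventually (eventually_gt_atTop (R + 2))
      have hc := (hfreq 1 one_pos).and_eventually
        (hev.and (hbig.and (eventually_ge_atTop a)))
      obtain ⟨T, h1, h2, h3, h4⟩ := hc.exists
      rw [hMeq T h4] at h3
      rw [hkey T h4] at h3
      have := le_abs_self (G T)
      linarith
    · have hGl : Tendsto G atTop (𝓝 (l - R)) := by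
        have heq : (fun T => M T - (lam ^ 2).im * ∫ x in (0:ℝ)..T, q x) =ᶠ[atTop] G := by
          filter_upwards [eventually_ge_atTop a] with T hT
          rw [hMeq T hT, hkey T hT]; ring
        exact (hl.sub hl').congr' heq
      have hlR : l = R := by
        have habs : Tendsto (fun T => |G T|) atTop (𝓝 |l - R|) := hGl.abs
        have hle : ∀ ε : ℝ, 0 < ε → |l - R| ≤ ε := by
          intro ε hε
          exact isClosed_Iic.mem_of_frequently_of_tendsto (hfreq ε hε) habs
        have h0 : |l - R| ≤ 0 := by
          apply le_of_forall_pos_le_add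
          intro ε hε
          simpa using hle ε hε
        have := abs_eq_zero.mp (le_antisymm h0 (abs_nonneg _))
        linarith [sub_eq_zero.mp this]
      rw [← hlR]; exact hl
  -- integrability of g on (0,∞)
  have hgi : IntegrableOn g (Ioi 0) := by
    apply integrableOn_Ioi_of_intervalIntegral_norm_tendsto R 0 (b := fun T : ℝ => max T a)
      (l := atTop)
    · intro T
      have h0s : (0:ℝ) ≤ max T a := le_of_lt (lt_of_lt_of_le ha (le_max_right _ _))
      exact (intervalIntegrable_iff_integrableOn_Ioc_of_le h0s).mp
        (hgint 0 (max T a) le_rfl h0s)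
    · exact hbmax
    · have heq : ∀ T : ℝ, (∫ x in (0:ℝ)..(max T a), ‖g x‖) = M T := by
        intro T
        rw [hMdef]
        apply intervalIntegral.integral_congr
        intro x _
        exact Real.norm_of_nonneg (hgnn x)
      exact hMR.congr (fun T => (heq T).symm)
  -- conclude
  have hfin : Tendsto M atTop (𝓝 (∫ x in Ioi (0:ℝ), g x)) :=
    intervalIntegral_tendsto_integral_Ioi 0 hgi hbmax
  have hfinal : (∫ x in Ioi (0:ℝ), g x) = R := tendsto_nhds_unique hfin hMR
  exact hfinal
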